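/- arXiv:2309.06614 — 3 statements merged into one kernel-verified Lean document; each statement's English description precedes it below -/
import Mathlib

section
/- The right-angled Artin group functor A : Gph → Grp is comonadic: A restricts to an equivalence of categories between the category Gph of reflexive graphs with graph homomorphisms and the category Grp_{AC} of groups equipped with an AC-coalgebra structure, with AC-cohomomorphisms as morphisms. -/
/-- A (reflexive, symmetric) graph: a set of vertices with a reflexive
symmetric relation. -/
structure Gph : Type 1 where
  V : Type
  rel : V → V → Prop
  refl : ∀ v, rel v v
  symm : ∀ {v w}, rel v w → rel w v

/-- A homomorphism of graphs: a function on vertices preserving the relation. -/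
@[ext]
structure GphHom (Γ Δ : Gph) where
  toFun : Γ.V → Δ.V
  map_rel : ∀ {v w}, Γ.rel v w → Δ.rel (toFun v) (toFun w)

/-- The identity graph homomorphism. -/
def GphHom.id (Γ : Gph) : GphHom Γ Γ :=
  ⟨fun v => v, fun h => h⟩

/-- Composition of graph homomorphisms. -/
def GphHom.comp {Γ Δ Θ : Gph} (ψ : GphHom Δ Θ) (φ : GphHom Γ Δ) : GphHom Γ Θ :=
  ⟨fun v => ψ.toFun (φ.toFun v), fun h => ψ.map_rel (φ.map_rel h)⟩

/-- The commutator relators of the right-angled Artin group of `Γ`. -/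
def raagRels (Γ : Gph) : Set (FreeGroup Γ.V) :=
  { r | ∃ v w, Γ.rel v w ∧
      r = FreeGroup.of v * FreeGroup.of w * (FreeGroup.of v)⁻¹ * (FreeGroup.of w)⁻¹ }

/-- The right-angled Artin group of a graph `Γ`: generated by the vertices,
with commutation relations given by the edges. -/
abbrev Raag (Γ : Gph) : Type :=
  PresentedGroup (raagRels Γ)

/-- The image of a vertex `v` as a generator of the right-angled Artin group. -/
def Raag.of {Γ : Gph} (v : Γ.V) : Raag Γ :=
  PresentedGroup.of v

/-- Related vertices commute in the right-angled Artin group. -/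
theorem Raag.commute_of {Γ : Gph} {v w : Γ.V} (h : Γ.rel v w) :
    Commute (Raag.of v) (Raag.of w) := by
  have h1 : (PresentedGroup.mk (raagRels Γ))
      (FreeGroup.of v * FreeGroup.of w * (FreeGroup.of v)⁻¹ * (FreeGroup.of w)⁻¹) = 1 := by
    apply (QuotientGroup.eq_one_iff _).2
    exact Subgroup.subset_normalClosure ⟨v, w, h, rfl⟩
  rw [← commutatorElement_eq_one_iff_commute]
  simpa only [commutatorElement_def, map_mul, map_inv, Raag.of, PresentedGroup.of] using h1

/-- The universal property of the right-angled Artin group. -/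
def Raag.lift {Γ : Gph} {G : Type*} [Group G] (f : Γ.V → G)
    (hf : ∀ {v w}, Γ.rel v w → Commute (f v) (f w)) : Raag Γ →* G :=
  PresentedGroup.toGroup (f := f) (by
    rintro r ⟨v, w, hvw, rfl⟩
    have := commutatorElement_eq_one_iff_commute.2 (hf hvw)
    rw [commutatorElement_def] at this
    simpa only [map_mul, map_inv, FreeGroup.lift_apply_of] using this)

@[simp]
theorem Raag.lift_of {Γ : Gph} {G : Type*} [Group G] (f : Γ.V → G)
    (hf : ∀ {v w}, Γ.rel v w → Commute (f v) (f w)) (v : Γ.V) :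
    Raag.lift f hf (Raag.of v) = f v :=
  PresentedGroup.toGroup.of _

theorem Raag.hom_ext {Γ : Gph} {G : Type*} [Group G] {f g : Raag Γ →* G}
    (h : ∀ v, f (Raag.of v) = g (Raag.of v)) : f = g :=
  PresentedGroup.ext h

/-- The group homomorphism `Aφ` induced by a graph homomorphism `φ`. -/
def GphHom.map {Γ Δ : Gph} (φ : GphHom Γ Δ) : Raag Γ →* Raag Δ :=
  Raag.lift (fun v => Raag.of (φ.toFun v)) (fun h => Raag.commute_of (φ.map_rel h))

@[simp]
theorem GphHom.map_of {Γ Δ : Gph} (φ : GphHom Γ Δ) (v : Γ.V) :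
    φ.map (Raag.of v) = Raag.of (φ.toFun v) :=
  Raag.lift_of _ (fun h => Raag.commute_of (φ.map_rel h)) v

/-- The commutation graph of a group `G`: vertices are elements of `G`,
related exactly when they commute. -/
abbrev commGraph (G : Type) [Group G] : Gph where
  V := G
  rel g h := g * h = h * g
  refl _ := rfl
  symm h := h.symm

/-- `AC G`: the right-angled Artin group of the commutation graph of `G`. -/
abbrev AC (G : Type) [Group G] : Type :=
  Raag (commGraph G)

/-- `ACf : ACG →* ACH`, `[g] ↦ [f g]`, induced by a group homomorphism `f`. -/
def ACmap {G H : Type} [Group G] [Group H] (f : G →* H) : AC G →* AC H :=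
  GphHom.map (Γ := commGraph G) (Δ := commGraph H)
    ⟨f, fun {a b} h => show f a * f b = f b * f a by
      rw [← map_mul, show a * b = b * a from h, map_mul]⟩

@[simp]
theorem ACmap_of {G H : Type} [Group G] [Group H] (f : G →* H) (g : G) :
    ACmap f (Raag.of (Γ := commGraph G) g) = Raag.of (Γ := commGraph H) (f g) :=
  GphHom.map_of _ _

/-- The counit `ε_G : ACG →* G`, `[g] ↦ g`. -/
def ACcounit (G : Type) [Group G] : AC G →* G :=
  Raag.lift (Γ := commGraph G) (fun g => g) (fun h => h)

@[simp]
theorem ACcounit_of {G : Type} [Group G] (g : G) :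
    ACcounit G (Raag.of (Γ := commGraph G) g) = g :=
  Raag.lift_of (Γ := commGraph G) (fun g => g) (fun h => h) g

/-- The comultiplication `δ_G : ACG →* AC(ACG)`, `[g] ↦ [[g]]`. -/
def ACcomul (G : Type) [Group G] : AC G →* AC (AC G) :=
  Raag.lift (Γ := commGraph G)
    (fun g => Raag.of (Γ := commGraph (AC G)) (Raag.of (Γ := commGraph G) g))
    (fun h => Raag.commute_of (Raag.commute_of h))

@[simp]
theorem ACcomul_of {G : Type} [Group G] (g : G) :
    ACcomul G (Raag.of (Γ := commGraph G) g) =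
      Raag.of (Γ := commGraph (AC G)) (Raag.of (Γ := commGraph G) g) :=
  Raag.lift_of (Γ := commGraph G) _ (fun h => Raag.commute_of (Raag.commute_of h)) g

/-- The canonical `AC`-coalgebra structure map on a right-angled Artin group,
sending each vertex generator `v` to `[v]`. -/
def raagCoalgStr (Γ : Gph) : Raag Γ →* AC (Raag Γ) :=
  Raag.lift (fun v => Raag.of (Γ := commGraph (Raag Γ)) (Raag.of v))
    (fun h => Raag.commute_of (Raag.commute_of h))

@[simp]
theorem raagCoalgStr_of {Γ : Gph} (v : Γ.V) :
    raagCoalgStr Γ (Raag.of v) = Raag.of (Γ := commGraph (Raag Γ)) (Raag.of v) :=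
  Raag.lift_of _ (fun h => Raag.commute_of (Raag.commute_of h)) v

/-- An `AC`-coalgebra structure on a group `G` is a group homomorphism
`𝔤 : G →* ACG` satisfying the counit and coassociativity laws. -/
def IsACCoalgebra {G : Type} [Group G] (𝔤 : G →* AC G) : Prop :=
  (ACcounit G).comp 𝔤 = MonoidHom.id G ∧ (ACmap 𝔤).comp 𝔤 = (ACcomul G).comp 𝔤

/-- `f` is an `AC`-cohomomorphism from `(G, 𝔤)` to `(H, 𝔥)`. -/
def IsACCohom {G H : Type} [Group G] [Group H]
    (𝔤 : G →* AC G) (𝔥 : H →* AC H) (f : G →* H) : Prop :=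
  𝔥.comp f = (ACmap f).comp 𝔤
open CategoryTheory

/-- The category `Gph` of (reflexive) graphs and graph homomorphisms. -/
instance : Category Gph where
  Hom := GphHom
  id := GphHom.id
  comp φ ψ := ψ.comp φ
  id_comp _ := rfl
  comp_id _ := rfl
  assoc _ _ _ := rfl
theorem ACmap_id (G : Type) [Group G] : ACmap (MonoidHom.id G) = MonoidHom.id (AC G) :=
  Raag.hom_ext fun g => by simp

theorem ACmap_comp {G H K : Type} [Group G] [Group H] [Group K] (f : G →* H) (g : H →* K) :
    ACmap (g.comp f) = (ACmap g).comp (ACmap f) :=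
  Raag.hom_ext fun x => by simp

/-- The category `Grp_{AC}` of groups equipped with an `AC`-coalgebra structure. -/
structure ACCoalgebra : Type 1 where
  carrier : Type
  [grp : Group carrier]
  str : carrier →* AC carrier
  counit : (ACcounit carrier).comp str = MonoidHom.id carrier
  coassoc : (ACmap str).comp str = (ACcomul carrier).comp str

attribute [instance] ACCoalgebra.grp

/-- An `AC`-cohomomorphism between `AC`-coalgebras: a group homomorphism
compatible with the coalgebra structure maps. -/
@[ext]
structure ACCoalgHom (X Y : ACCoalgebra) where
  hom : X.carrier →* Y.carrier
  cohom : Y.str.comp hom = (ACmap hom).comp X.str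

instance : Category ACCoalgebra where
  Hom := ACCoalgHom
  id X := ⟨MonoidHom.id _, by rw [MonoidHom.comp_id, ACmap_id, MonoidHom.id_comp]⟩
  comp f g := ⟨g.hom.comp f.hom, by
    rw [← MonoidHom.comp_assoc, g.cohom, MonoidHom.comp_assoc, f.cohom,
      ← MonoidHom.comp_assoc, ← ACmap_comp]⟩
  id_comp f := by apply ACCoalgHom.ext; exact MonoidHom.comp_id f.hom
  comp_id f := by apply ACCoalgHom.ext; exact MonoidHom.id_comp f.hom
  assoc f g h := by apply ACCoalgHom.ext; rfl

/-- The right-angled Artin group functor `A : Gph ⥤ Grp_{AC}`, sending a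
graph to its raag equipped with the canonical `AC`-coalgebra structure and a
graph homomorphism `φ` to the `AC`-cohomomorphism `Aφ`. -/
def raagCoalgFunctor : Gph ⥤ ACCoalgebra where
  obj Γ :=
    { carrier := Raag Γ
      str := raagCoalgStr Γ
      counit := Raag.hom_ext fun v => by simp
      coassoc := Raag.hom_ext fun v => by simp }
  map φ := ⟨φ.map, Raag.hom_ext fun v => by simp⟩
  map_id Γ := by apply ACCoalgHom.ext; exact Raag.hom_ext fun v => by simp [GphHom.id]; rfl
  map_comp φ ψ := by
    apply ACCoalgHom.ext
    exact Raag.hom_ext fun v => by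
      show (GphHom.comp ψ φ).map (Raag.of v) = (ψ.map.comp φ.map) (Raag.of v)
      simp [GphHom.comp]

/-! ### Auxiliary lemmas for the comonadicity theorem -/

section Aux

open Classical

/-- The abelianization-style map to `Multiplicative (Γ.V →₀ ℤ)`. -/
noncomputable def Raag.toAb (Γ : Gph) : Raag Γ →* Multiplicative (Γ.V →₀ ℤ) :=
  Raag.lift (fun v => Multiplicative.ofAdd (Finsupp.single v 1))
    (fun _ => Commute.all _ _)

theorem Raag.toAb_of {Γ : Gph} (v : Γ.V) :
    Raag.toAb Γ (Raag.of v) = Multiplicative.ofAdd (Finsupp.single v 1) :=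
  Raag.lift_of (fun v => Multiplicative.ofAdd (Finsupp.single v 1))
    (fun _ => Commute.all _ _) v

theorem Raag.of_injective {Γ : Gph} : Function.Injective (Raag.of : Γ.V → Raag Γ) := by
  intro a b h
  have h1 := congrArg (Raag.toAb Γ) h
  rw [Raag.toAb_of, Raag.toAb_of] at h1
  have h2 : (Finsupp.single a 1 : Γ.V →₀ ℤ) = Finsupp.single b 1 := h1
  exact Finsupp.single_left_injective one_ne_zero h2

theorem Raag.of_ne_one {Γ : Gph} (v : Γ.V) : (Raag.of v : Raag Γ) ≠ 1 := by
  intro h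
  have h1 := congrArg (Raag.toAb Γ) h
  rw [Raag.toAb_of, map_one] at h1
  have h2 : (Finsupp.single v 1 : Γ.V →₀ ℤ) = 0 := h1
  exact one_ne_zero (Finsupp.single_eq_zero.1 h2)

theorem Raag.closure_range_of (Γ : Gph) :
    Subgroup.closure (Set.range (Raag.of : Γ.V → Raag Γ)) = ⊤ :=
  PresentedGroup.closure_range_of _

theorem Raag.mem_top' {Γ : Gph} (g : Raag Γ) :
    g ∈ Subgroup.closure (Set.range (Raag.of : Γ.V → Raag Γ)) := by
  rw [Raag.closure_range_of]; exact Subgroup.mem_top g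

/-- Projection onto the subgroup generated by a subset `S` of the vertices:
vertices in `S` map to themselves, other vertices to `1`. -/
theorem Raag.proj_commute {Γ : Gph} (S : Set Γ.V) : ∀ {v w : Γ.V}, Γ.rel v w →
    Commute (if v ∈ S then (Raag.of v : Raag Γ) else 1)
      (if w ∈ S then (Raag.of w : Raag Γ) else 1) := by
  intro v w h
  by_cases hv : v ∈ S
  · by_cases hw : w ∈ S
    · rw [if_pos hv, if_pos hw]; exact Raag.commute_of h
    · rw [if_neg hw]; exact Commute.one_right _
  · rw [if_neg hv]; exact Commute.one_left _

noncomputable def Raag.proj (Γ : Gph) (S : Set Γ.V) : Raag Γ →* Raag Γ :=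
  Raag.lift (fun v => if v ∈ S then Raag.of v else 1) (Raag.proj_commute S)

theorem Raag.proj_of {Γ : Gph} (S : Set Γ.V) (v : Γ.V) :
    Raag.proj Γ S (Raag.of v) = if v ∈ S then Raag.of v else 1 :=
  Raag.lift_of (fun v => if v ∈ S then Raag.of v else 1) (Raag.proj_commute S) v

theorem Raag.proj_mem {Γ : Gph} (S : Set Γ.V) (g : Raag Γ) :
    Raag.proj Γ S g ∈ Subgroup.closure (Raag.of '' S) := by
  refine Subgroup.closure_induction (fun x hx => ?_) ?_ (fun x y hx' hy' hx hy => ?_)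
    (fun x hx' hx => ?_) (Raag.mem_top' g)
  · obtain ⟨v, rfl⟩ := hx
    rw [Raag.proj_of]
    by_cases hv : v ∈ S
    · rw [if_pos hv]; exact Subgroup.subset_closure ⟨v, hv, rfl⟩
    · rw [if_neg hv]; exact one_mem _
  · rw [map_one]; exact one_mem _
  · rw [map_mul]; exact mul_mem hx hy
  · rw [map_inv]; exact inv_mem hx

theorem Raag.proj_eq_self {Γ : Gph} {S : Set Γ.V} {g : Raag Γ}
    (h : g ∈ Subgroup.closure (Raag.of '' S)) : Raag.proj Γ S g = g := by
  refine Subgroup.closure_induction (fun x hx => ?_) ?_ (fun x y hx' hy' hx hy => ?_)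
    (fun x hx' hx => ?_) h
  · obtain ⟨v, hv, rfl⟩ := hx
    rw [Raag.proj_of, if_pos hv]
  · rw [map_one]
  · rw [map_mul, hx, hy]
  · rw [map_inv, hx]

/-- Two generators of a raag commute only if the corresponding vertices
are related. -/
theorem Raag.rel_of_commute {Γ : Gph} {a b : Γ.V}
    (h : Commute (Raag.of a : Raag Γ) (Raag.of b)) : Γ.rel a b := by
  by_contra hab
  have hne : a ≠ b := fun e => hab (e ▸ Γ.refl a)
  have hperm : ¬ Commute (Equiv.swap (0 : Fin 3) 1) (Equiv.swap (1 : Fin 3) 2) := by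
    rw [Commute, SemiconjBy]; decide
  let f : Γ.V → Equiv.Perm (Fin 3) := fun v =>
    if v = a then Equiv.swap 0 1 else if v = b then Equiv.swap 1 2 else 1
  have hf : ∀ {v w}, Γ.rel v w → Commute (f v) (f w) := by
    intro v w hvw
    show Commute (if v = a then Equiv.swap 0 1 else if v = b then Equiv.swap 1 2 else 1)
      (if w = a then Equiv.swap 0 1 else if w = b then Equiv.swap 1 2 else 1)
    by_cases hva : v = a
    · by_cases hwb : w = b
      · exact absurd (hva ▸ hwb ▸ hvw) hab
      · by_cases hwa : w = a
        · rw [if_pos hva, if_pos hwa]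
        · rw [if_neg hwa, if_neg hwb]; exact Commute.one_right _
    · by_cases hvb : v = b
      · by_cases hwa : w = a
        · exact absurd (Γ.symm (hvb ▸ hwa ▸ hvw)) hab
        · by_cases hwb : w = b
          · rw [if_neg hva, if_pos hvb, if_neg hwa, if_pos hwb]
          · rw [if_neg hva, if_pos hvb, if_neg hwa, if_neg hwb]; exact Commute.one_right _
      · rw [if_neg hva, if_neg hvb]; exact Commute.one_left _
  have h2 := h.map (Raag.lift f hf)
  rw [Raag.lift_of, Raag.lift_of] at h2
  have hfa : f a = Equiv.swap 0 1 := if_pos rfl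
  have hfb : f b = Equiv.swap 1 2 := by
    show (if b = a then _ else if b = b then _ else 1) = _
    rw [if_neg (Ne.symm hne), if_pos rfl]
  rw [hfa, hfb] at h2
  exact hperm h2

/-- The set of "vertex-like" elements of a group with a coalgebra structure map. -/
def vertexSet {G : Type} [Group G] (𝔤 : G →* AC G) : Set G :=
  {h : G | 𝔤 h = Raag.of (Γ := commGraph G) h}

/-- The key auxiliary homomorphism `Φ : AC (AC G) →* AC G`. -/
theorem phiAux_commute {G : Type} [Group G] (𝔤 : G →* AC G) :
    ∀ {x y : (commGraph (AC G)).V}, (commGraph (AC G)).rel x y →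
    Commute (if 𝔤 (ACcounit G x) = x then Raag.of (Γ := commGraph G) (ACcounit G x) else 1)
      (if 𝔤 (ACcounit G y) = y then Raag.of (Γ := commGraph G) (ACcounit G y) else 1) := by
  intro x y h
  by_cases hx : 𝔤 (ACcounit G x) = x
  · by_cases hy : 𝔤 (ACcounit G y) = y
    · rw [if_pos hx, if_pos hy]
      refine Raag.commute_of (Γ := commGraph G) ?_
      show ACcounit G x * ACcounit G y = ACcounit G y * ACcounit G x
      rw [← map_mul, show x * y = y * x from h, map_mul]
    · rw [if_neg hy]; exact Commute.one_right _
  · rw [if_neg hx]; exact Commute.one_left _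

noncomputable def phiAux {G : Type} [Group G] (𝔤 : G →* AC G) : AC (AC G) →* AC G :=
  Raag.lift (Γ := commGraph (AC G))
    (fun x => if 𝔤 (ACcounit G x) = x then Raag.of (Γ := commGraph G) (ACcounit G x) else 1)
    (phiAux_commute 𝔤)

set_option maxHeartbeats 1000000 in
theorem phiAux_of {G : Type} [Group G] (𝔤 : G →* AC G) (x : AC G) :
    phiAux 𝔤 (Raag.of (Γ := commGraph (AC G)) x) =
      if 𝔤 (ACcounit G x) = x then Raag.of (Γ := commGraph G) (ACcounit G x) else 1 := by
  unfold phiAux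
  exact Raag.lift_of _ (phiAux_commute 𝔤) x

/-- The crucial consequence of the coalgebra laws: the structure map lands in
the subgroup generated by the vertex-like generators. -/
theorem str_apply_mem {G : Type} [Group G] (𝔤 : G →* AC G)
    (hc : (ACcounit G).comp 𝔤 = MonoidHom.id G)
    (ha : (ACmap 𝔤).comp 𝔤 = (ACcomul G).comp 𝔤) (g : G) :
    𝔤 g ∈ Subgroup.closure (Raag.of '' vertexSet 𝔤) := by
  have h1 : (phiAux 𝔤).comp (ACmap 𝔤) = MonoidHom.id (AC G) := by
    refine Raag.hom_ext (Γ := commGraph G) fun h => ?_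
    have hch : ACcounit G (𝔤 h) = h := DFunLike.congr_fun hc h
    rw [MonoidHom.comp_apply, ACmap_of, phiAux_of, MonoidHom.id_apply]
    rw [hch, if_pos rfl]
  have h2 : (phiAux 𝔤).comp (ACcomul G) = Raag.proj (commGraph G) (vertexSet 𝔤) := by
    refine Raag.hom_ext (Γ := commGraph G) fun h => ?_
    rw [MonoidHom.comp_apply, ACcomul_of, phiAux_of, ACcounit_of, Raag.proj_of]
    by_cases hh : h ∈ vertexSet 𝔤
    · rw [if_pos hh, if_pos (show 𝔤 h = Raag.of (Γ := commGraph G) h from hh)]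
    · rw [if_neg hh, if_neg (show ¬ 𝔤 h = Raag.of (Γ := commGraph G) h from hh)]
  have e1 : phiAux 𝔤 (ACmap 𝔤 (𝔤 g)) = 𝔤 g := by
    have := DFunLike.congr_fun h1 (𝔤 g)
    rwa [MonoidHom.comp_apply, MonoidHom.id_apply] at this
  have e2 : phiAux 𝔤 (ACcomul G (𝔤 g)) = Raag.proj (commGraph G) (vertexSet 𝔤) (𝔤 g) := by
    have := DFunLike.congr_fun h2 (𝔤 g)
    rwa [MonoidHom.comp_apply] at this
  have e3 : ACmap 𝔤 (𝔤 g) = ACcomul G (𝔤 g) := by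
    have := DFunLike.congr_fun ha g
    rwa [MonoidHom.comp_apply, MonoidHom.comp_apply] at this
  have key : 𝔤 g = Raag.proj (commGraph G) (vertexSet 𝔤) (𝔤 g) := by
    rw [← e2, ← e3, e1]
  rw [key]
  exact Raag.proj_mem _ _

/-- Vertex-like elements of a raag (with its canonical coalgebra structure)
are exactly the generators. -/
theorem mem_range_of_str_eq {Γ : Gph} {g : Raag Γ}
    (h : raagCoalgStr Γ g = Raag.of (Γ := commGraph (Raag Γ)) g) :
    g ∈ Set.range (Raag.of : Γ.V → Raag Γ) := by
  have h1 : raagCoalgStr Γ g ∈ Subgroup.closure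
      ((Raag.of (Γ := commGraph (Raag Γ))) '' Set.range (Raag.of : Γ.V → Raag Γ)) := by
    have hmem := Raag.mem_top' g
    clear h
    refine Subgroup.closure_induction (fun x hx => ?_) ?_ (fun x y hx' hy' hx hy => ?_)
      (fun x hx' hx => ?_) hmem
    · obtain ⟨v, rfl⟩ := hx
      rw [raagCoalgStr_of]
      exact Subgroup.subset_closure ⟨Raag.of v, ⟨v, rfl⟩, rfl⟩
    · rw [map_one]; exact one_mem _
    · rw [map_mul]; exact mul_mem hx hy
    · rw [map_inv]; exact inv_mem hx
  rw [h] at h1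
  have h2 := Raag.proj_eq_self h1
  by_contra hg
  rw [Raag.proj_of, if_neg hg] at h2
  exact Raag.of_ne_one (Γ := commGraph (Raag Γ)) g h2.symm

end Aux
section Instances

open Classical

instance : raagCoalgFunctor.Faithful where
  map_injective {Γ Δ} {φ ψ} h := by
    have h' : φ.map = ψ.map := congrArg ACCoalgHom.hom h
    have hfun : φ.toFun = ψ.toFun := by
      funext v
      apply Raag.of_injective (Γ := Δ)
      have hv := DFunLike.congr_fun h' (Raag.of v)
      rwa [GphHom.map_of, GphHom.map_of] at hv
    exact GphHom.ext hfun

instance : raagCoalgFunctor.Full where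
  map_surjective {Γ Δ} u := by
    have hv : ∀ v : Γ.V, ∃ w : Δ.V, Raag.of w = u.hom (Raag.of v) := by
      intro v
      have hc := DFunLike.congr_fun u.cohom (Raag.of v)
      have h0 : (raagCoalgFunctor.obj Γ).str (Raag.of v) =
          Raag.of (Γ := commGraph (Raag Γ)) (Raag.of v) := raagCoalgStr_of v
      have hc' : raagCoalgStr Δ (u.hom (Raag.of v)) =
          Raag.of (Γ := commGraph (Raag Δ)) (u.hom (Raag.of v)) := by
        exact hc.trans ((congrArg (ACmap u.hom) h0).trans (ACmap_of _ _))
      exact mem_range_of_str_eq hc'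
    choose φf hφ using hv
    refine ⟨⟨φf, ?_⟩, ?_⟩
    · intro v w hvw
      refine Raag.rel_of_commute (Γ := Δ) ?_
      rw [hφ v, hφ w]
      exact (Raag.commute_of hvw).map u.hom
    · apply ACCoalgHom.ext
      refine Raag.hom_ext fun v => ?_
      show GphHom.map _ (Raag.of v) = u.hom (Raag.of v)
      rw [GphHom.map_of]
      exact hφ v

instance : raagCoalgFunctor.EssSurj where
  mem_essImage X := by
    letI G := X.carrier
    let 𝔤 : G →* AC G := X.str
    let S : Set G := vertexSet 𝔤
    let ΓG : Gph := ⟨S, fun a b => (a : G) * b = b * a, fun _ => rfl, fun h => h.symm⟩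
    let θ : Raag ΓG →* G := Raag.lift (Γ := ΓG) (fun s => (s : G)) (fun h => h)
    have θ_of : ∀ s : S, θ (Raag.of (Γ := ΓG) s) = (s : G) := fun s =>
      Raag.lift_of (Γ := ΓG) (fun s => (s : G)) (fun h => h) s
    let qf : G → Raag ΓG := fun h => if hh : h ∈ S then Raag.of (Γ := ΓG) ⟨h, hh⟩ else 1
    have hqf : ∀ {x y : (commGraph G).V}, (commGraph G).rel x y → Commute (qf x) (qf y) := by
      intro x y h
      show Commute (if hh : x ∈ S then Raag.of (Γ := ΓG) ⟨x, hh⟩ else 1)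
        (if hh : y ∈ S then Raag.of (Γ := ΓG) ⟨y, hh⟩ else 1)
      by_cases hx : x ∈ S
      · by_cases hy : y ∈ S
        · rw [dif_pos hx, dif_pos hy]
          exact Raag.commute_of (Γ := ΓG) h
        · rw [dif_neg hy]; exact Commute.one_right _
      · rw [dif_neg hx]; exact Commute.one_left _
    let q : AC G →* Raag ΓG := Raag.lift (Γ := commGraph G) qf hqf
    have q_of : ∀ h : G, q (Raag.of (Γ := commGraph G) h) = qf h := fun h =>
      Raag.lift_of (Γ := commGraph G) qf hqf h
    let ψ : G →* Raag ΓG := q.comp 𝔤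
    have ψ_app : ∀ g : G, ψ g = q (𝔤 g) := fun g => rfl
    -- θ ∘ ψ = id
    have hθq : ∀ x ∈ Subgroup.closure ((Raag.of (Γ := commGraph G)) '' S),
        θ (q x) = ACcounit G x := by
      intro x hx
      refine Subgroup.closure_induction (fun x hx => ?_) ?_ (fun x y hx' hy' hx hy => ?_)
        (fun x hx' hx => ?_) hx
      · obtain ⟨h, hh, rfl⟩ := hx
        rw [q_of, ACcounit_of, show qf h = Raag.of (Γ := ΓG) ⟨h, hh⟩ from dif_pos hh,
          θ_of ⟨h, hh⟩]
      · rw [map_one, map_one, map_one]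
      · rw [map_mul, map_mul, map_mul, hx, hy]
      · rw [map_inv, map_inv, map_inv, hx]
    have hθψ : θ.comp ψ = MonoidHom.id G := by
      ext g
      rw [MonoidHom.comp_apply, MonoidHom.id_apply, ψ_app g,
        hθq (𝔤 g) (str_apply_mem 𝔤 X.counit X.coassoc g)]
      exact DFunLike.congr_fun X.counit g
    have hψθ : ψ.comp θ = MonoidHom.id (Raag ΓG) := by
      refine Raag.hom_ext fun s => ?_
      rw [MonoidHom.comp_apply, MonoidHom.id_apply, θ_of s, ψ_app,
        show 𝔤 (s : G) = Raag.of (Γ := commGraph G) (s : G) from s.prop, q_of,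
        show qf (s : G) = Raag.of (Γ := ΓG) ⟨(s : G), s.prop⟩ from dif_pos s.prop]
    -- coalgebra morphism conditions
    have cohomθ : X.str.comp θ = (ACmap θ).comp (raagCoalgStr ΓG) := by
      refine Raag.hom_ext fun s => ?_
      rw [MonoidHom.comp_apply, MonoidHom.comp_apply, raagCoalgStr_of, ACmap_of, θ_of s]
      exact s.prop
    have cohomψ : (raagCoalgStr ΓG).comp ψ = (ACmap ψ).comp X.str := by
      symm
      calc (ACmap ψ).comp X.str
          = (ACmap ψ).comp (X.str.comp (θ.comp ψ)) := by rw [hθψ, MonoidHom.comp_id]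
        _ = (ACmap ψ).comp ((X.str.comp θ).comp ψ) :=
            congrArg (fun k => (ACmap ψ).comp k) (MonoidHom.comp_assoc ψ θ X.str).symm
        _ = (ACmap ψ).comp (((ACmap θ).comp (raagCoalgStr ΓG)).comp ψ) := by rw [cohomθ]
        _ = (ACmap ψ).comp ((ACmap θ).comp ((raagCoalgStr ΓG).comp ψ)) :=
            congrArg (fun k => (ACmap ψ).comp k)
              (MonoidHom.comp_assoc ψ (raagCoalgStr ΓG) (ACmap θ))
        _ = ((ACmap ψ).comp (ACmap θ)).comp ((raagCoalgStr ΓG).comp ψ) :=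
            (MonoidHom.comp_assoc ((raagCoalgStr ΓG).comp ψ) (ACmap θ) (ACmap ψ)).symm
        _ = (raagCoalgStr ΓG).comp ψ := by rw [← ACmap_comp, hψθ, ACmap_id, MonoidHom.id_comp]
    exact ⟨ΓG, ⟨{ hom := ⟨θ, cohomθ⟩
                  inv := ⟨ψ, cohomψ⟩
                  hom_inv_id := by apply ACCoalgHom.ext; exact hψθ
                  inv_hom_id := by apply ACCoalgHom.ext; exact hθψ }⟩⟩

end Instances
/-- **Main Theorem.** The right-angled Artin group functor `A : Gph → Grp` is
comonadic: it is an equivalence of categories between the category of graphs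
and the category of groups equipped with an `AC`-coalgebra structure, with
`AC`-cohomomorphisms between them. -/
theorem raag_comonadic : raagCoalgFunctor.IsEquivalence := {}
end

section
/- A group G is isomorphic to a right-angled Artin group AΓ for some graph Γ if and only if G admits an AC-coalgebra structure, i.e. there exists a group homomorphism 𝔤 : G → ACG satisfying ε_G ∘ 𝔤 = id_G and (AC𝔤) ∘ 𝔤 = δ_G ∘ 𝔤. -/
/-! ### Auxiliary support theory for RAAGs -/

section Support

open Classical

variable {Γ Δ : Gph}

/-- The retraction of `Raag Γ` onto the special subgroup generated by the
vertices in `U`, killing all other vertex generators. -/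
theorem rret_aux (U : Set Γ.V) : ∀ {v w : Γ.V}, Γ.rel v w →
    Commute (if v ∈ U then Raag.of v else 1) (if w ∈ U then Raag.of w else 1) := by
  intro v w h
  by_cases hv : v ∈ U <;> by_cases hw : w ∈ U <;>
    simp [hv, hw, Raag.commute_of h, Commute.one_left, Commute.one_right]

noncomputable def rret (U : Set Γ.V) : Raag Γ →* Raag Γ :=
  Raag.lift (fun v => if v ∈ U then Raag.of v else 1) (rret_aux U)

@[simp] theorem rret_of (U : Set Γ.V) (v : Γ.V) :
    rret U (Raag.of v) = if v ∈ U then Raag.of v else 1 :=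
  Raag.lift_of _ (rret_aux U) v

theorem raag_closure_range_of (Γ : Gph) :
    Subgroup.closure (Set.range (Raag.of (Γ := Γ))) = ⊤ :=
  PresentedGroup.closure_range_of _

theorem rret_rret (U U' : Set Γ.V) (w : Raag Γ) :
    rret U (rret U' w) = rret (U ∩ U') w := by
  have : (rret U).comp (rret U') = rret (U ∩ U' : Set Γ.V) := by
    apply Raag.hom_ext
    intro v
    by_cases h' : v ∈ U' <;> by_cases h : v ∈ U <;>
      simp [h, h', Set.mem_inter_iff]
  exact DFunLike.congr_fun this w

theorem rfix_inter {U U' : Set Γ.V} {w : Raag Γ}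
    (hU : rret U w = w) (hU' : rret U' w = w) : rret (U ∩ U') w = w := by
  rw [← rret_rret, hU', hU]

theorem rfix_mono {U U' : Set Γ.V} {w : Raag Γ}
    (hU : rret U w = w) (hUU' : U ⊆ U') : rret U' w = w := by
  have h1 : rret U' w = rret U' (rret U w) := by rw [hU]
  rw [h1, rret_rret, Set.inter_eq_self_of_subset_right hUU', hU]

theorem mem_closure_of_rfix {U : Set Γ.V} {w : Raag Γ} (h : rret U w = w) :
    w ∈ Subgroup.closure (Raag.of '' U) := by
  have hle : Subgroup.closure (Set.range (Raag.of (Γ := Γ))) ≤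
      Subgroup.comap (rret U) (Subgroup.closure (Raag.of '' U)) := by
    rw [Subgroup.closure_le]
    rintro _ ⟨v, rfl⟩
    simp only [SetLike.mem_coe, Subgroup.mem_comap, rret_of]
    by_cases hv : v ∈ U
    · simp only [if_pos hv]
      exact Subgroup.subset_closure ⟨v, hv, rfl⟩
    · simp only [if_neg hv]
      exact Subgroup.one_mem _
    
  have hw : w ∈ Subgroup.closure (Set.range (Raag.of (Γ := Γ))) := by
    rw [raag_closure_range_of]; trivial
  have := hle hw
  rw [Subgroup.mem_comap, h] at this
  exact this

theorem rfix_of_mem_closure {U : Set Γ.V} {w : Raag Γ}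
    (h : w ∈ Subgroup.closure (Raag.of '' U)) : rret U w = w := by
  induction h using Subgroup.closure_induction with
  | mem x hx =>
      obtain ⟨v, hv, rfl⟩ := hx
      simp [hv]
  | one => simp
  | mul x y _ _ hx hy => rw [map_mul, hx, hy]
  | inv x _ hx => rw [map_inv, hx]

/-- The support of an element of a RAAG: the intersection of all vertex sets
`U` such that the element is fixed by the retraction onto `U`. -/
def rsupp (w : Raag Γ) : Set Γ.V :=
  {v | ∀ U : Set Γ.V, rret U w = w → v ∈ U}

theorem rsupp_subset {U : Set Γ.V} {w : Raag Γ} (h : rret U w = w) :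
    rsupp w ⊆ U := fun _ hv => hv U h

theorem exists_finset_rfix (w : Raag Γ) : ∃ F : Finset Γ.V, rret ↑F w = w := by
  have : w ∈ (⊤ : Subgroup (Raag Γ)) := trivial
  rw [← raag_closure_range_of] at this
  induction this using Subgroup.closure_induction with
  | mem x hx =>
      obtain ⟨v, rfl⟩ := hx
      exact ⟨{v}, by simp⟩
  | one => exact ⟨∅, by simp⟩
  | mul x y _ _ hx hy =>
      obtain ⟨F, hF⟩ := hx
      obtain ⟨F', hF'⟩ := hy
      refine ⟨F ∪ F', ?_⟩
      have h1 : rret (↑(F ∪ F') : Set Γ.V) x = x :=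
        rfix_mono hF (by simp only [Finset.coe_union]; exact Set.subset_union_left)
      have h2 : rret (↑(F ∪ F') : Set Γ.V) y = y :=
        rfix_mono hF' (by simp only [Finset.coe_union]; exact Set.subset_union_right)
      rw [map_mul, h1, h2]
  | inv x _ hx =>
      obtain ⟨F, hF⟩ := hx
      exact ⟨F, by rw [map_inv, hF]⟩

theorem rret_rsupp (w : Raag Γ) : rret (rsupp w) w = w := by
  obtain ⟨F, hF⟩ := exists_finset_rfix w
  set A : Finset (Finset Γ.V) := F.powerset.filter (fun B => rret ↑B w = w) with hA
  have hFA : F ∈ A := by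
    simp [hA, hF]
  have hne : A.Nonempty := ⟨F, hFA⟩
  set I : Finset Γ.V := A.inf' hne id with hIdef
  have hI : rret (↑I : Set Γ.V) w = w := by
    apply Finset.inf'_induction (p := fun B : Finset Γ.V => rret ↑B w = w)
    · intro a ha b hb
      have : ((a ⊓ b : Finset Γ.V) : Set Γ.V) = ↑a ∩ ↑b := by
        simp [Finset.coe_inter]
      rw [this]
      exact rfix_inter ha hb
    · intro B hB
      simp only [hA, Finset.mem_filter] at hB
      exact hB.2
  have hIsub : (↑I : Set Γ.V) ⊆ rsupp w := by
    intro v hv U hU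
    have hAU : F.filter (· ∈ U) ∈ A := by
      have : ((F.filter (· ∈ U)) : Set Γ.V) = ↑F ∩ U := by
        ext x; simp [Finset.mem_filter]
      simp only [hA, Finset.mem_filter, Finset.mem_powerset]
      exact ⟨Finset.filter_subset _ _, by rw [this]; exact rfix_inter hF hU⟩
    have hle : I ≤ F.filter (· ∈ U) := Finset.inf'_le id hAU
    have := hle hv
    exact (Finset.mem_filter.1 this).2
  have hsubI : rsupp w ⊆ ↑I := rsupp_subset hI
  have : rsupp w = ↑I := Set.Subset.antisymm hsubI hIsub
  rw [this]; exact hI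

theorem rfix_of_rsupp_subset {U : Set Γ.V} {w : Raag Γ} (h : rsupp w ⊆ U) :
    rret U w = w :=
  rfix_mono (rret_rsupp w) h

theorem mem_closure_rsupp (w : Raag Γ) :
    w ∈ Subgroup.closure (Raag.of '' rsupp w) :=
  mem_closure_of_rfix (rret_rsupp w)

theorem rsupp_map_subset (φ : GphHom Γ Δ) (w : Raag Γ) :
    rsupp (φ.map w) ⊆ φ.toFun '' rsupp w := by
  apply rsupp_subset
  apply rfix_of_mem_closure
  have h1 : φ.map w ∈ (Subgroup.closure (Raag.of '' rsupp w)).map φ.map :=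
    Subgroup.mem_map_of_mem _ (mem_closure_rsupp w)
  rw [MonoidHom.map_closure] at h1
  have h2 : ⇑φ.map '' (Raag.of '' rsupp w) = Raag.of '' (φ.toFun '' rsupp w) := by
    rw [← Set.image_comp, ← Set.image_comp]
    apply Set.image_congr
    intro v _
    simp [Function.comp]
  rwa [h2] at h1

theorem image_rsupp_subset (φ : GphHom Γ Δ) (hinj : Function.Injective φ.toFun)
    (hminj : Function.Injective φ.map) (w : Raag Γ) :
    φ.toFun '' rsupp w ⊆ rsupp (φ.map w) := by
  have key : ∀ (U : Set Γ.V) (x : Raag Γ),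
      φ.map (rret U x) = rret (φ.toFun '' U) (φ.map x) := by
    intro U
    have : φ.map.comp (rret U) = (rret (φ.toFun '' U)).comp φ.map := by
      apply Raag.hom_ext
      intro v
      by_cases hv : v ∈ U
      · simp [hv, Set.mem_image_of_mem _ hv]
      · have hnv : φ.toFun v ∉ φ.toFun '' U := by
          rintro ⟨u, hu, he⟩
          exact hv (hinj he ▸ hu)
        simp [hv, hnv]
    exact fun x => DFunLike.congr_fun this x
  set W := rsupp (φ.map w) with hW
  have hWsub : W ⊆ φ.toFun '' rsupp w := rsupp_map_subset φ w
  have hWrange : W ⊆ Set.range φ.toFun := by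
    intro x hx
    obtain ⟨v, _, rfl⟩ := hWsub hx
    exact ⟨v, rfl⟩
  have himg : φ.toFun '' (φ.toFun ⁻¹' W) = W :=
    Set.image_preimage_eq_of_subset hWrange
  have h1 : rret (φ.toFun '' (φ.toFun ⁻¹' W)) (φ.map w) = φ.map w := by
    rw [himg]
    exact rret_rsupp _
  have h2 : φ.map (rret (φ.toFun ⁻¹' W) w) = φ.map w := by
    rw [key]; exact h1
  have h3 : rret (φ.toFun ⁻¹' W) w = w := hminj h2
  have h4 : rsupp w ⊆ φ.toFun ⁻¹' W := rsupp_subset h3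
  rintro _ ⟨v, hv, rfl⟩
  exact h4 hv

end Support


/-! ### Auxiliary constructions for the main theorem -/

/-- The graph hom `g ↦ [g]` from the commutation graph of `G` to that of `AC G`. -/
private def jGph (G : Type) [Group G] : GphHom (commGraph G) (commGraph (AC G)) :=
  ⟨fun g => Raag.of g, fun {_ _} h => (Raag.commute_of h).eq⟩

/-- The graph hom induced on vertices by a coalgebra structure map `𝔤`. -/
private def gGph {G : Type} [Group G] (𝔤 : G →* AC G) :
    GphHom (commGraph G) (commGraph (AC G)) :=
  ⟨fun g => 𝔤 g, fun {a b} h => by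
    show 𝔤 a * 𝔤 b = 𝔤 b * 𝔤 a
    rw [← map_mul, show a * b = b * a from h, map_mul]⟩

open Classical

/-- The full subgraph of the commutation graph of `G` on a set `S`. -/
private abbrev coalgGraph {G : Type} [Group G] (S : Set G) : Gph where
  V := {g : G // g ∈ S}
  rel a b := (a : G) * b = (b : G) * a
  refl _ := rfl
  symm h := h.symm

/-- The evaluation homomorphism `Raag (coalgGraph S) →* G`. -/
private def coalgToG {G : Type} [Group G] (S : Set G) : Raag (coalgGraph S) →* G :=
  Raag.lift (fun v => (v : G)) (fun {_ _} h => h)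

@[simp] private theorem coalgToG_of {G : Type} [Group G] (S : Set G)
    (v : (coalgGraph S).V) : coalgToG S (Raag.of v) = (v : G) :=
  Raag.lift_of _ (fun {_ _} h => h) v

private theorem coalgProj_aux {G : Type} [Group G] (S : Set G) :
    ∀ {a b : (commGraph G).V}, (commGraph G).rel a b →
      Commute (if ha : a ∈ S then Raag.of (Γ := coalgGraph S) ⟨a, ha⟩ else 1)
        (if hb : b ∈ S then Raag.of (Γ := coalgGraph S) ⟨b, hb⟩ else 1) := by
  intro a b hab
  by_cases ha : a ∈ S
  · by_cases hb : b ∈ S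
    · rw [dif_pos ha, dif_pos hb]
      exact Raag.commute_of hab
    · rw [dif_neg hb]
      exact Commute.one_right _
  · rw [dif_neg ha]
    exact Commute.one_left _

/-- The projection `AC G →* Raag (coalgGraph S)` killing generators outside `S`. -/
private noncomputable def coalgProj {G : Type} [Group G] (S : Set G) :
    AC G →* Raag (coalgGraph S) :=
  Raag.lift (Γ := commGraph G)
    (fun g => if hg : g ∈ S then Raag.of (Γ := coalgGraph S) ⟨g, hg⟩ else 1)
    (coalgProj_aux S)

@[simp] private theorem coalgProj_of {G : Type} [Group G] (S : Set G) (g : G) :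
    coalgProj S (Raag.of (Γ := commGraph G) g) =
      if hg : g ∈ S then Raag.of (Γ := coalgGraph S) ⟨g, hg⟩ else 1 :=
  Raag.lift_of _ (coalgProj_aux S) g

/-- A group `G` is isomorphic to a right-angled Artin group `AΓ` for some graph
`Γ` if and only if `G` admits an `AC`-coalgebra structure, i.e. a group
homomorphism `𝔤 : G →* ACG` with `ε_G ∘ 𝔤 = id_G` and `(AC𝔤) ∘ 𝔤 = δ_G ∘ 𝔤`. -/
theorem isomorphic_to_raag_iff_accoalgebra (G : Type) [Group G] :
    (∃ Γ : Gph, Nonempty (G ≃* Raag Γ)) ↔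
      ∃ 𝔤 : G →* AC G, (ACcounit G).comp 𝔤 = MonoidHom.id G ∧
        (ACmap 𝔤).comp 𝔤 = (ACcomul G).comp 𝔤 := by
  constructor
  · -- Forward: a RAAG carries a canonical coalgebra structure.
    rintro ⟨Γ, ⟨e⟩⟩
    refine ⟨(ACmap e.symm.toMonoidHom).comp ((raagCoalgStr Γ).comp e.toMonoidHom), ?_, ?_⟩
    · ext g
      simp only [MonoidHom.comp_apply, MonoidHom.id_apply, MulEquiv.coe_toMonoidHom]
      have hnat : (ACcounit G).comp (ACmap e.symm.toMonoidHom) =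
          e.symm.toMonoidHom.comp (ACcounit (Raag Γ)) := by
        apply Raag.hom_ext; intro w; simp
      have h1 := DFunLike.congr_fun hnat (raagCoalgStr Γ (e g))
      simp only [MonoidHom.comp_apply] at h1
      rw [h1]
      have hes : (ACcounit (Raag Γ)).comp (raagCoalgStr Γ) = MonoidHom.id (Raag Γ) := by
        apply Raag.hom_ext; intro v; simp
      have h2 := DFunLike.congr_fun hes (e g)
      simp only [MonoidHom.comp_apply, MonoidHom.id_apply] at h2
      rw [h2]
      simp
    · set 𝔤 := (ACmap e.symm.toMonoidHom).comp ((raagCoalgStr Γ).comp e.toMonoidHom)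
        with h𝔤
      have hgen : ∀ v : Γ.V,
          𝔤 (e.symm (Raag.of v)) = Raag.of (Γ := commGraph G) (e.symm (Raag.of v)) := by
        intro v
        simp [h𝔤]
      have key : ((ACmap 𝔤).comp 𝔤).comp e.symm.toMonoidHom =
          ((ACcomul G).comp 𝔤).comp e.symm.toMonoidHom := by
        apply Raag.hom_ext
        intro v
        simp only [MonoidHom.comp_apply, MulEquiv.coe_toMonoidHom]
        rw [hgen v, ACmap_of, ACcomul_of, hgen v]
      ext g
      have := DFunLike.congr_fun key (e g)
      simpa using this
  · -- Backward: a coalgebra structure exhibits `G` as a RAAG.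
    rintro ⟨𝔤, hcounit, hcoassoc⟩
    classical
    set S : Set G := {g : G | 𝔤 g = Raag.of (Γ := commGraph G) g} with hS
    have hε : ∀ g : G, ACcounit G (𝔤 g) = g := by
      intro g
      have := DFunLike.congr_fun hcounit g
      simpa using this
    have hofinj : Function.Injective (Raag.of (Γ := commGraph G)) := by
      intro a b h
      have := congrArg (ACcounit G) h
      simpa using this
    have hδ : ACcomul G = (jGph G).map := by
      apply Raag.hom_ext; intro v
      simp [jGph]
    have hACg : ACmap 𝔤 = (gGph 𝔤).map := by
      apply Raag.hom_ext; intro v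
      simp [gGph]
    have hjinj : Function.Injective (jGph G).toFun := hofinj
    have hjmapinj : Function.Injective (jGph G).map := by
      have hli : (ACmap (ACcounit G)).comp (jGph G).map = MonoidHom.id (AC G) := by
        apply Raag.hom_ext; intro v
        simp [jGph]
      intro a b h
      have ha := DFunLike.congr_fun hli a
      have hb := DFunLike.congr_fun hli b
      simp only [MonoidHom.comp_apply, MonoidHom.id_apply] at ha hb
      rw [← ha, ← hb, h]
    have hsupp : ∀ g : G, rsupp (𝔤 g) ⊆ S := by
      intro g h hh
      have heq : (gGph 𝔤).map (𝔤 g) = (jGph G).map (𝔤 g) := by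
        rw [← hACg, ← hδ]
        have := DFunLike.congr_fun hcoassoc g
        simpa using this
      have h1 : (jGph G).toFun '' rsupp (𝔤 g) ⊆ rsupp ((jGph G).map (𝔤 g)) :=
        image_rsupp_subset (jGph G) hjinj hjmapinj _
      have h2 : rsupp ((gGph 𝔤).map (𝔤 g)) ⊆ (gGph 𝔤).toFun '' rsupp (𝔤 g) :=
        rsupp_map_subset (gGph 𝔤) _
      rw [heq] at h2
      have h3 : (jGph G).toFun h ∈ (gGph 𝔤).toFun '' rsupp (𝔤 g) :=
        h2 (h1 ⟨h, hh, rfl⟩)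
      obtain ⟨h', hh', he⟩ := h3
      have hee : 𝔤 h' = Raag.of (Γ := commGraph G) h := he
      have hh'' : h' = h := by
        have := congrArg (ACcounit G) hee
        simpa [hε] using this
      subst hh''
      simpa only [hS, Set.mem_setOf_eq] using hee
    have hψφ : ∀ x : Raag (coalgGraph S), coalgProj S (𝔤 (coalgToG S x)) = x := by
      have hid : (coalgProj S).comp (𝔤.comp (coalgToG S)) =
          MonoidHom.id (Raag (coalgGraph S)) := by
        apply Raag.hom_ext
        rintro ⟨s, hs⟩
        simp only [MonoidHom.comp_apply, MonoidHom.id_apply, coalgToG_of]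
        rw [show 𝔤 s = Raag.of (Γ := commGraph G) s from hs, coalgProj_of, dif_pos hs]
      intro x
      have := DFunLike.congr_fun hid x
      simpa using this
    have hmemS : ∀ g : G, 𝔤 g ∈ Subgroup.closure ((Raag.of (Γ := commGraph G)) '' S) :=
      fun g => Subgroup.closure_mono (Set.image_mono (hsupp g)) (mem_closure_rsupp (𝔤 g))
    have hφp : ∀ x ∈ Subgroup.closure ((Raag.of (Γ := commGraph G)) '' S),
        coalgToG S (coalgProj S x) = ACcounit G x := by
      intro x hx
      induction hx using Subgroup.closure_induction with
      | mem y hy =>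
          obtain ⟨s, hs, rfl⟩ := hy
          rw [coalgProj_of, dif_pos hs, coalgToG_of, ACcounit_of]
      | one => simp
      | mul a b _ _ ha hb => rw [map_mul, map_mul, map_mul, ha, hb]
      | inv a _ ha => rw [map_inv, map_inv, map_inv, ha]
    have hφψ : ∀ g : G, coalgToG S (coalgProj S (𝔤 g)) = g := fun g => by
      rw [hφp _ (hmemS g), hε g]
    exact ⟨coalgGraph S, ⟨{
      toFun := fun g => coalgProj S (𝔤 g)
      invFun := coalgToG S
      left_inv := hφψ
      right_inv := hψφ
      map_mul' := fun a b => by simp [map_mul] }⟩⟩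
end

section
/- Let Γ and Δ be graphs, let 𝔤 : AΓ → AC(AΓ) and 𝔥 : AΔ → AC(AΔ) be the canonical coalgebra structure maps sending each vertex generator v to [v], and let f : AΓ → AΔ be a group homomorphism. Then f = Aφ for some graph homomorphism φ : Γ → Δ if and only if f is an AC-cohomomorphism, i.e. 𝔥 ∘ f = (ACf) ∘ 𝔤. -/
/-- If two vertex generators commute in the RAAG, the vertices are related. -/
theorem Raag.rel_of_commute_s2 {Δ : Gph} {a b : Δ.V}
    (h : Commute (Raag.of a) (Raag.of b)) : Δ.rel a b := by
  by_contra hrel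
  classical
  have hab : a ≠ b := fun h' => hrel (h' ▸ Δ.refl a)
  let x : Equiv.Perm (Fin 3) := Equiv.swap 0 1
  let y : Equiv.Perm (Fin 3) := Equiv.swap 1 2
  have hxy : ¬ Commute x y := by
    intro hc
    have h0 := congr_arg (fun p : Equiv.Perm (Fin 3) => p 0) hc
    simp [x, y, Equiv.Perm.mul_apply, Equiv.swap_apply_def] at h0
  let F : Δ.V → Equiv.Perm (Fin 3) := fun v => if v = a then x else if v = b then y else 1
  have hF : ∀ {v w}, Δ.rel v w → Commute (F v) (F w) := by
    intro v w hvw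
    show Commute (if v = a then x else if v = b then y else 1)
      (if w = a then x else if w = b then y else 1)
    split_ifs with h1 h2 h3 h4 h5
    all_goals first
      | exact Commute.refl _
      | exact Commute.one_left _
      | exact Commute.one_right _
      | (exact absurd hvw (by subst_vars; exact hrel))
      | (exact absurd (Δ.symm hvw) (by subst_vars; exact hrel))
  have := (h.map (Raag.lift F hF))
  rw [Raag.lift_of, Raag.lift_of] at this
  have hFa : F a = x := by simp [F]
  have hFb : F b = y := by simp [F, hab.symm]
  rw [hFa, hFb] at this
  exact hxy this

/-- The subgroup of `Multiplicative (Raag Δ →₀ ℤ)` of elements supported on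
vertex generators. -/
noncomputable def genSupp (Δ : Gph) : Subgroup (Multiplicative (Raag Δ →₀ ℤ)) where
  carrier := {a | ∀ y ∈ (Multiplicative.toAdd a).support, ∃ w, y = Raag.of w}
  one_mem' := by intro y hy; simp at hy
  mul_mem' := by
    classical
    intro a b ha hb y hy
    rw [toAdd_mul] at hy
    rcases Finset.mem_union.mp (Finsupp.support_add hy) with h | h
    · exact ha y h
    · exact hb y h
  inv_mem' := by
    intro a ha y hy
    rw [toAdd_inv, Finsupp.support_neg] at hy
    exact ha y hy

theorem mem_genSupp {Δ : Gph} {a : Multiplicative (Raag Δ →₀ ℤ)} :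
    a ∈ genSupp Δ ↔ ∀ y ∈ (Multiplicative.toAdd a).support, ∃ w, y = Raag.of w :=
  Iff.rfl

/-- An element fixed in the appropriate sense by the coalgebra map is a
vertex generator. -/
theorem exists_of_coalg_eq {Δ : Gph} {x : Raag Δ}
    (h : raagCoalgStr Δ x = Raag.of (Γ := commGraph (Raag Δ)) x) :
    ∃ w, x = Raag.of w := by
  classical
  let ψ : AC (Raag Δ) →* Multiplicative (Raag Δ →₀ ℤ) :=
    Raag.lift (Γ := commGraph (Raag Δ))
      (fun g => Multiplicative.ofAdd (Finsupp.single g 1)) (fun _ => Commute.all _ _)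
  let χ : Raag Δ →* genSupp Δ :=
    Raag.lift (fun w => ⟨Multiplicative.ofAdd (Finsupp.single (Raag.of w) 1), mem_genSupp.mpr (by
      intro y hy
      rw [toAdd_ofAdd, Finsupp.support_single_ne_zero _ one_ne_zero] at hy
      exact ⟨w, Finset.mem_singleton.mp hy⟩)⟩) (fun _ => Commute.all _ _)
  have key : ψ.comp (raagCoalgStr Δ) = (genSupp Δ).subtype.comp χ :=
    Raag.hom_ext (fun v => by simp [ψ, χ])
  have h1 : ψ (raagCoalgStr Δ x) = (χ x).val := DFunLike.congr_fun key x
  rw [h, Raag.lift_of] at h1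
  have h2 := mem_genSupp.mp (χ x).2
  rw [← h1] at h2
  exact h2 x (by simp)

/-- A group homomorphism `f : AΓ →* AΔ` between right-angled Artin groups is
induced by a graph homomorphism if and only if it is an `AC`-cohomomorphism
with respect to the canonical coalgebra structure maps. -/
theorem eq_map_iff_isACCohom {Γ Δ : Gph} (f : Raag Γ →* Raag Δ) :
    (∃ φ : GphHom Γ Δ, f = φ.map) ↔
      (raagCoalgStr Δ).comp f = (ACmap f).comp (raagCoalgStr Γ) := by
  constructor
  · rintro ⟨φ, rfl⟩
    apply Raag.hom_ext
    intro v
    simp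
  · intro H
    have hgen : ∀ v : Γ.V, ∃ w, f (Raag.of v) = Raag.of w := by
      intro v
      apply exists_of_coalg_eq
      have := DFunLike.congr_fun H (Raag.of v)
      simpa using this
    choose φf hφf using hgen
    refine ⟨⟨φf, ?_⟩, ?_⟩
    · intro v w hvw
      apply Raag.rel_of_commute_s2
      rw [← hφf, ← hφf]
      exact (Raag.commute_of hvw).map f
    · exact Raag.hom_ext (fun v => by rw [hφf, GphHom.map_of])
end
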